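/- arXiv:1303.5884 — 2 statements merged into one kernel-verified Lean document; each statement's English description precedes it below -/
import Mathlib

section
/- Let u : (a,b) → ℝ be continuous and nonnegative, and suppose u satisfies u'' ≤ u in the support sense (for every t₀ and ε > 0 there is a C² support function φ ≥ u near t₀ with φ(t₀) = u(t₀) and φ''(t₀) ≤ u(t₀) + ε). Then for any μ : (a,b) → ℝ that is C² with μ'' ≤ −2 and |μ| < 1/10, and any ε ∈ (0,1), the function u + ε·μ restricted to the set where u < ε satisfies (u+εμ)'' ≤ −ε in the support sense. -/
/-- `u'' ≤ g` on `s` in the support (barrier) sense: at every `t₀ ∈ s` and every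
`ε > 0` there is a C² function `φ ≥ u` near `t₀` with `φ t₀ = u t₀` and
`φ'' t₀ ≤ g t₀ + ε`. -/
def SecondDerivLESupport (s : Set ℝ) (u g : ℝ → ℝ) : Prop :=
  ∀ t₀ ∈ s, ∀ ε > 0, ∃ φ : ℝ → ℝ,
    ContDiff ℝ 2 φ ∧ φ t₀ = u t₀ ∧ (∀ᶠ t in nhds t₀, u t ≤ φ t) ∧
      deriv (deriv φ) t₀ ≤ g t₀ + ε

/-- If `u ≥ 0` is continuous on `(a,b)` and satisfies `u'' ≤ u` in the support
sense, `μ` is C² with `μ'' ≤ -2` and `|μ| < 1/10` on `(a,b)`, and `ε ∈ (0,1)`,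
then `u + ε μ` satisfies `(u + ε μ)'' ≤ -ε` in the support sense on the set
where `u < ε`. -/
theorem support_ineq_perturbation {a b : ℝ} {u μ : ℝ → ℝ}
    (hu_cont : ContinuousOn u (Set.Ioo a b))
    (hu_nonneg : ∀ t ∈ Set.Ioo a b, 0 ≤ u t)
    (hu_supp : SecondDerivLESupport (Set.Ioo a b) u u)
    (hμ : ContDiffOn ℝ 2 μ (Set.Ioo a b))
    (hμ'' : ∀ t ∈ Set.Ioo a b, iteratedDerivWithin 2 μ (Set.Ioo a b) t ≤ -2)
    (hμ_small : ∀ t ∈ Set.Ioo a b, |μ t| < 1 / 10)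
    {ε : ℝ} (hε : ε ∈ Set.Ioo (0 : ℝ) 1) :
    SecondDerivLESupport {t ∈ Set.Ioo a b | u t < ε}
      (fun t => u t + ε * μ t) (fun _ => -ε) := by
  rintro t₀ ⟨ht0, hult⟩ δ hδ
  set s := Set.Ioo a b with hs
  have hopen : IsOpen s := isOpen_Ioo
  obtain ⟨φ₀, hφ₀C, hφ₀eq, hφ₀ev, hφ₀''⟩ := hu_supp t₀ ht0 (δ / 2) (by positivity)
  -- basic regularity of μ
  have hμd : DifferentiableOn ℝ μ s := hμ.differentiableOn (by norm_num)
  have hμ1 : ContDiffOn ℝ 1 (deriv μ) s := hμ.deriv_of_isOpen hopen (by norm_num)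
  have hμ1d : DifferentiableOn ℝ (deriv μ) s := hμ1.differentiableOn (by norm_num)
  have hμ2cont : ContinuousOn (deriv (deriv μ)) s :=
    (hμ1.deriv_of_isOpen (m := 0) hopen (by norm_num)).continuousOn
  set m := deriv μ t₀ with hm
  set c := deriv (deriv μ) t₀ with hcdef
  -- c ≤ -2
  have hc : c ≤ -2 := by
    have h2 := hμ'' t₀ ht0
    have hud : UniqueDiffOn ℝ s := hopen.uniqueDiffOn
    have e1 : iteratedDerivWithin 2 μ s t₀ = derivWithin (derivWithin μ s) s t₀ := by
      rw [iteratedDerivWithin_eq_iterate]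
      simp [Function.iterate_succ_apply']
    have e2 : derivWithin (derivWithin μ s) s t₀ = deriv (derivWithin μ s) t₀ :=
      derivWithin_of_isOpen hopen ht0
    have e3 : deriv (derivWithin μ s) t₀ = deriv (deriv μ) t₀ := by
      apply Filter.EventuallyEq.deriv_eq
      filter_upwards [hopen.mem_nhds ht0] with t ht
      exact derivWithin_of_isOpen hopen ht
    rw [e1, e2, e3] at h2
    exact h2
  -- choose a small interval where μ'' < c + δ/2
  have hcA : ContinuousAt (deriv (deriv μ)) t₀ := hμ2cont.continuousAt (hopen.mem_nhds ht0)
  have hev : ∀ᶠ t in nhds t₀, deriv (deriv μ) t < c + δ / 2 :=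
    hcA.eventually (eventually_lt_nhds (show c < c + δ / 2 by linarith))
  have hsev : ∀ᶠ t in nhds t₀, t ∈ s := by
    filter_upwards [hopen.mem_nhds ht0] with t ht using ht
  obtain ⟨r, hr0, hball⟩ := Metric.mem_nhds_iff.mp (hev.and hsev)
  set D := Set.Ioo (t₀ - r) (t₀ + r) with hD
  have hDsub : ∀ t ∈ D, deriv (deriv μ) t < c + δ / 2 ∧ t ∈ s := by
    intro t ht
    have : t ∈ Metric.ball t₀ r := by rw [Real.ball_eq_Ioo]; exact ht
    exact hball this
  have ht₀D : t₀ ∈ D := ⟨by linarith, by linarith⟩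
  have hDopen : IsOpen D := isOpen_Ioo
  have hD_nhds : D ∈ nhds t₀ := hDopen.mem_nhds ht₀D
  set k := c + δ / 2 with hk
  set ψ : ℝ → ℝ := fun t => μ t₀ + m * (t - t₀) + (k / 2) * (t - t₀) ^ 2 with hψ
  have hψt₀ : ψ t₀ = μ t₀ := by simp [hψ]
  -- derivative computations for ψ
  have hsub : ∀ t : ℝ, HasDerivAt (fun t => t - t₀) 1 t := fun t =>
    (hasDerivAt_id t).sub_const t₀
  have hψd : ∀ t, HasDerivAt ψ (m + k * (t - t₀)) t := by
    intro t
    have h := (((hsub t).const_mul m).const_add (μ t₀)).add (((hsub t).pow 2).const_mul (k / 2))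
    exact h.congr_deriv (by rw [show (2:ℕ) - 1 = 1 from rfl]; push_cast; ring)
  have hψd' : ∀ t, HasDerivAt (fun t => m + k * (t - t₀)) k t := by
    intro t
    have h := ((hsub t).const_mul k).const_add m
    exact h.congr_deriv (by ring)
  have hψC : ContDiff ℝ 2 ψ := by
    apply ContDiff.add
    apply ContDiff.add contDiff_const
    · exact contDiff_const.mul ((contDiff_id.sub contDiff_const))
    · exact contDiff_const.mul ((contDiff_id.sub contDiff_const).pow 2)
  set g : ℝ → ℝ := fun t => ψ t - μ t with hg
  have hgt₀ : g t₀ = 0 := by simp [hg, hψt₀]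
  have hμat : ∀ t ∈ D, DifferentiableAt ℝ μ t := fun t ht =>
    (hμd t (hDsub t ht).2).differentiableAt (hopen.mem_nhds (hDsub t ht).2)
  have hμ'at : ∀ t ∈ D, DifferentiableAt ℝ (deriv μ) t := fun t ht =>
    (hμ1d t (hDsub t ht).2).differentiableAt (hopen.mem_nhds (hDsub t ht).2)
  have hgat : ∀ t ∈ D, HasDerivAt g (m + k * (t - t₀) - deriv μ t) t := fun t ht =>
    (hψd t).sub (hμat t ht).hasDerivAt
  have hgderiv_ev : ∀ t ∈ D, deriv g =ᶠ[nhds t] fun x => m + k * (x - t₀) - deriv μ x := by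
    intro t ht
    filter_upwards [hDopen.mem_nhds ht] with x hx using (hgat x hx).deriv
  have hg'at : ∀ t ∈ D, HasDerivAt (deriv g) (k - deriv (deriv μ) t) t := by
    intro t ht
    have h := (hψd' t).sub (hμ'at t ht).hasDerivAt
    exact h.congr_of_eventuallyEq (hgderiv_ev t ht)
  have hgconv : ConvexOn ℝ D g := by
    apply convexOn_of_deriv2_nonneg (convex_Ioo _ _)
    · exact (hψC.continuous.continuousOn).sub (hμ.continuousOn.mono fun t ht => (hDsub t ht).2)
    · rw [interior_Ioo]
      exact fun t ht => (hgat t ht).differentiableAt.differentiableWithinAt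
    · rw [interior_Ioo]
      exact fun t ht => (hg'at t ht).differentiableAt.differentiableWithinAt
    · rw [interior_Ioo]
      intro x hx
      have h2 : deriv (deriv g) x = k - deriv (deriv μ) x := (hg'at x hx).deriv
      have h3 : deriv (deriv μ) x < k := (hDsub x hx).1
      simp only [Function.iterate_succ_apply', Function.iterate_zero_apply]
      rw [h2]
      linarith
  have hg0 : HasDerivAt g 0 t₀ := by
    have h := hgat t₀ ht₀D
    simpa [hm] using h
  -- g ≥ 0 on D
  have hgnn : ∀ y ∈ D, 0 ≤ g y := by
    intro y hy
    rcases lt_trichotomy y t₀ with h | h | h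
    · have hsl := hgconv.slope_le_of_hasDerivAt hy ht₀D h hg0
      rw [slope_def_field, hgt₀] at hsl
      rw [div_le_iff₀ (by linarith : (0:ℝ) < t₀ - y)] at hsl
      linarith
    · rw [h, hgt₀]
    · have hsl := hgconv.le_slope_of_hasDerivAt ht₀D hy h hg0
      rw [slope_def_field, hgt₀] at hsl
      rw [le_div_iff₀ (by linarith : (0:ℝ) < y - t₀)] at hsl
      linarith
  -- assemble the support function
  refine ⟨fun t => φ₀ t + ε * ψ t, hφ₀C.add (contDiff_const.mul hψC), by
      simp [hφ₀eq, hψt₀], ?_, ?_⟩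
  · filter_upwards [hφ₀ev, hD_nhds] with t h1 h2
    have hμψ : μ t ≤ ψ t := by
      have := hgnn t h2
      simp only [hg] at this
      linarith
    have := mul_le_mul_of_nonneg_left hμψ hε.1.le
    linarith
  · have hφ₀diff : Differentiable ℝ φ₀ := hφ₀C.differentiable (by norm_num)
    have hφ₀d1 : Differentiable ℝ (deriv φ₀) := by
      have h1 : ContDiff ℝ (1 + 1) φ₀ := by exact_mod_cast hφ₀C
      exact ((contDiff_succ_iff_deriv.mp h1).2.2).differentiable (by norm_num)
    have hD1 : ∀ t, HasDerivAt (fun t => φ₀ t + ε * ψ t)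
        (deriv φ₀ t + ε * (m + k * (t - t₀))) t := fun t =>
      (hφ₀diff t).hasDerivAt.add ((hψd t).const_mul ε)
    have hEq : deriv (fun t => φ₀ t + ε * ψ t)
        = fun t => deriv φ₀ t + ε * (m + k * (t - t₀)) := funext fun t => (hD1 t).deriv
    have hD2 : HasDerivAt (deriv fun t => φ₀ t + ε * ψ t)
        (deriv (deriv φ₀) t₀ + ε * k) t₀ := by
      rw [hEq]
      exact (hφ₀d1 t₀).hasDerivAt.add ((hψd' t₀).const_mul ε)
    rw [hD2.deriv]
    have h1 := hε.1
    have h2 := hε.2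
    show deriv (deriv φ₀) t₀ + ε * k ≤ -ε + δ
    have h3 : ε * c ≤ ε * (-2) := mul_le_mul_of_nonneg_left hc h1.le
    have h4 : ε * (δ / 2) ≤ δ / 2 := by nlinarith
    have h5 : ε * k ≤ -2 * ε + δ / 2 := by rw [hk]; nlinarith
    have h6 : deriv (deriv φ₀) t₀ + ε * k ≤ u t₀ + δ / 2 + (-2 * ε + δ / 2) :=
      add_le_add hφ₀'' h5
    exact le_trans h6 (by linarith only [hult, hδ, hε.1])
end

section
/- Let Cᵢ be a sequence of compact convex sets in ℝⁿ with nonempty interior converging in Hausdorff distance to a compact convex set C with nonempty interior. Then the boundaries ∂Cᵢ converge to ∂C in Hausdorff distance. -/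
open Metric Set
local notation "⟪" x ", " y "⟫_ℝ" => @inner ℝ _ _ x y

/-- A preconnected set meeting both `s` and `sᶜ` meets `frontier s`. -/
lemma aux_preconnected_frontier {X : Type*} [TopologicalSpace X] {S s : Set X}
    (hS : IsPreconnected S) {x z : X} (hx : x ∈ S) (hz : z ∈ S)
    (hxs : x ∈ s) (hzs : z ∉ s) : ∃ w ∈ S, w ∈ frontier s := by
  by_contra h
  push_neg at h
  have hmem : ∀ w ∈ S, w ∈ closure s → w ∈ interior s := by
    intro w hw hwc
    have h2 := h w hw
    rw [frontier_eq_closure_inter_closure, mem_inter_iff, not_and] at h2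
    have h3 := h2 hwc
    rw [closure_compl, mem_compl_iff, not_not] at h3
    exact h3
  have hcover : S ⊆ interior s ∪ (closure s)ᶜ := by
    intro w hw
    by_cases hwc : w ∈ closure s
    · exact Or.inl (hmem w hw hwc)
    · exact Or.inr hwc
  have hzcl : z ∉ closure s := fun hzc => hzs (interior_subset (hmem z hz hzc))
  obtain ⟨w, hwS, hw1, hw2⟩ :=
    hS (interior s) (closure s)ᶜ isOpen_interior isClosed_closure.isOpen_compl hcover
      ⟨x, hx, hmem x hx (subset_closure hxs)⟩ ⟨z, hz, hzcl⟩
  exact hw2 (subset_closure (interior_subset hw1))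

/-- If a point is within `a` of a set and of its complement, it is within `a` of the
frontier. -/
lemma infDist_frontier_le_aux {E : Type*} [NormedAddCommGroup E] [NormedSpace ℝ E]
    {s : Set E} {x : E} {a : ℝ} (ha : 0 ≤ a) (h1 : infDist x s ≤ a)
    (h2 : infDist x sᶜ ≤ a) : infDist x (frontier s) ≤ a := by
  rcases s.eq_empty_or_nonempty with rfl | hs
  · simpa using ha
  rcases sᶜ.eq_empty_or_nonempty with hse | hsc
  · have : s = univ := by simpa [compl_empty_iff] using hse
    simp [this, ha]
  refine le_of_forall_pos_le_add fun ε hε => ?_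
  obtain ⟨y, hy, hdy⟩ := (infDist_lt_iff hs).1 (lt_of_le_of_lt h1 (lt_add_of_pos_right a hε))
  obtain ⟨z, hz, hdz⟩ := (infDist_lt_iff hsc).1 (lt_of_le_of_lt h2 (lt_add_of_pos_right a hε))
  by_cases hx : x ∈ s
  · obtain ⟨w, hwseg, hwf⟩ :=
      aux_preconnected_frontier (convex_segment x z).isPreconnected
        (left_mem_segment ℝ x z) (right_mem_segment ℝ x z) hx hz
    have hdw : dist x w ≤ dist x z := by
      have := dist_add_dist_of_mem_segment hwseg
      nlinarith [dist_nonneg (x := w) (y := z)]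
    calc infDist x (frontier s) ≤ dist x w := infDist_le_dist_of_mem hwf
      _ ≤ dist x z := hdw
      _ ≤ a + ε := le_of_lt hdz
  · obtain ⟨w, hwseg, hwf⟩ :=
      aux_preconnected_frontier (convex_segment x y).isPreconnected
        (right_mem_segment ℝ x y) (left_mem_segment ℝ x y) hy hx
    have hdw : dist x w ≤ dist x y := by
      have := dist_add_dist_of_mem_segment hwseg
      nlinarith [dist_nonneg (x := w) (y := y)]
    calc infDist x (frontier s) ≤ dist x w := infDist_le_dist_of_mem hwf
      _ ≤ dist x y := hdw
      _ ≤ a + ε := le_of_lt hdy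

/-- If every point of the closed ball of radius `t` is within `δ` of a compact convex set
`C`, then the closed ball of radius `t - δ` is contained in `C`. -/
lemma closedBall_subset_of_infDist_le {E : Type*} [NormedAddCommGroup E]
    [InnerProductSpace ℝ E] {Cs : Set E} (hC : IsCompact Cs) (hconv : Convex ℝ Cs)
    (hne : Cs.Nonempty) {δ t : ℝ} (hδ : 0 ≤ δ) {x : E}
    (hball : ∀ z ∈ closedBall x t, infDist z Cs ≤ δ) :
    closedBall x (t - δ) ⊆ Cs := by
  intro y hy
  rw [mem_closedBall] at hy
  have ht : 0 ≤ t - δ := le_trans dist_nonneg hy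
  by_contra hyC
  obtain ⟨p, hp, hyp⟩ := hC.exists_infDist_eq_dist hne y
  have ht0 : (0:ℝ) ≤ t := by linarith
  have hd : 0 < dist y p := by
    rcases eq_or_lt_of_le (dist_nonneg (x := y) (y := p)) with h | h
    · exact absurd (by rwa [← dist_eq_zero.1 h.symm] at hp) hyC
    · exact h
  set d := dist y p with hdd
  set v := y - p with hv
  have hvnorm : ‖v‖ = d := by rw [hv, hdd, dist_eq_norm]
  -- obtuse angle property of the metric projection
  have hobtuse : ∀ c ∈ Cs, ⟪v, c - p⟫_ℝ ≤ 0 := by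
    have hiInf : ‖y - p‖ = ⨅ w : Cs, ‖y - w‖ := by
      have h0 : infDist y Cs = ⨅ w : Cs, dist y w := infDist_eq_iInf
      rw [← dist_eq_norm, ← hdd, ← hyp, h0]
      simp_rw [dist_eq_norm]
    exact fun c hc => (norm_eq_iInf_iff_real_inner_le_zero hconv hp).1 hiInf c hc
  set u := (d⁻¹ : ℝ) • v with hu
  have hunorm : ‖u‖ = 1 := by
    rw [hu, norm_smul, hvnorm, norm_inv, Real.norm_eq_abs, abs_of_pos hd,
      inv_mul_cancel₀ hd.ne']
  set w := x + t • u with hw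
  have hwball : w ∈ closedBall x t := by
    rw [mem_closedBall, dist_eq_norm, hw]
    simp [norm_smul, hunorm, abs_of_nonneg ht0]
  obtain ⟨c, hc, hwc⟩ := hC.exists_infDist_eq_dist hne w
  have hwcδ : dist w c ≤ δ := hwc ▸ hball w hwball
  -- key inner product computation
  have hdecomp : w - c = (w - x) + ((x - y) + ((y - p) + (p - c))) := by abel
  have hwx : ⟪v, w - x⟫_ℝ = t * d := by
    have : w - x = (t * d⁻¹) • v := by rw [hw, hu]; rw [add_sub_cancel_left, smul_smul]
    rw [this, real_inner_smul_right, real_inner_self_eq_norm_sq, hvnorm]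
    field_simp
  have hxy : -(d * (t - δ)) ≤ ⟪v, x - y⟫_ℝ := by
    have h1 : |⟪v, x - y⟫_ℝ| ≤ ‖v‖ * ‖x - y‖ := abs_real_inner_le_norm v (x - y)
    have h2 : ‖x - y‖ ≤ t - δ := by rwa [← dist_eq_norm, dist_comm]
    have h3 : ‖v‖ * ‖x - y‖ ≤ d * (t - δ) := by
      rw [hvnorm]; exact mul_le_mul_of_nonneg_left h2 hd.le
    nlinarith [abs_nonneg (⟪v, x - y⟫_ℝ), neg_abs_le (⟪v, x - y⟫_ℝ)]
  have hyp2 : ⟪v, y - p⟫_ℝ = d ^ 2 := by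
    rw [← hv, real_inner_self_eq_norm_sq, hvnorm]
  have hpc : 0 ≤ ⟪v, p - c⟫_ℝ := by
    have : p - c = -(c - p) := by abel
    rw [this, inner_neg_right]
    linarith [hobtuse c hc]
  have hupper : ⟪v, w - c⟫_ℝ ≤ d * δ := by
    calc ⟪v, w - c⟫_ℝ ≤ ‖v‖ * ‖w - c‖ := real_inner_le_norm v (w - c)
      _ = d * dist w c := by rw [hvnorm, dist_eq_norm]
      _ ≤ d * δ := mul_le_mul_of_nonneg_left hwcδ hd.le
  have hlower : d * δ + d ^ 2 ≤ ⟪v, w - c⟫_ℝ := by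
    rw [hdecomp, inner_add_right, inner_add_right, inner_add_right, hwx, hyp2]
    nlinarith
  nlinarith

/-- Pointwise bound: a frontier point of one convex body is within `δ` of the frontier
of the other. -/
lemma infDist_frontier_le_of_convex {E : Type*} [NormedAddCommGroup E]
    [InnerProductSpace ℝ E] {A B : Set E} (hBcpt : IsCompact B) (hBconv : Convex ℝ B)
    (hBne : B.Nonempty) {δ : ℝ} (hδ : 0 ≤ δ)
    (hAB : ∀ z ∈ A, infDist z B ≤ δ) (hBA : ∀ z ∈ B, infDist z A ≤ δ)
    {x : E} (hx : x ∈ frontier B) : infDist x (frontier A) ≤ δ := by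
  have hxB : x ∈ B := by
    have := frontier_subset_closure hx
    rwa [hBcpt.isClosed.closure_eq] at this
  have hxnint : x ∉ interior B := by
    rw [frontier_eq_closure_inter_closure] at hx
    have := hx.2
    rw [closure_compl] at this
    exact this
  have h1 : infDist x A ≤ δ := hBA x hxB
  have h2 : infDist x Aᶜ ≤ δ := by
    refine le_of_forall_gt_imp_ge_of_dense fun t ht => ?_
    by_cases hb : ∃ y, dist x y ≤ t ∧ y ∉ A
    · obtain ⟨y, hyd, hyA⟩ := hb
      exact le_trans (infDist_le_dist_of_mem hyA) hyd
    · push_neg at hb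
      exfalso
      have hball : closedBall x t ⊆ A := fun y hy => hb y (mem_closedBall'.1 hy)
      have hball2 : ∀ z ∈ closedBall x t, infDist z B ≤ δ := fun z hz => hAB z (hball hz)
      have hsub : closedBall x (t - δ) ⊆ B :=
        closedBall_subset_of_infDist_le hBcpt hBconv hBne hδ hball2
      exact hxnint (mem_interior.2 ⟨Metric.ball x (t - δ),
        (ball_subset_closedBall).trans hsub, isOpen_ball, mem_ball_self (by linarith)⟩)
  exact infDist_frontier_le_aux hδ h1 h2

/-- If compact convex bodies `Cᵢ` (with nonempty interior) converge in Hausdorff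
distance to a compact convex body `C` with nonempty interior, then their boundaries
`∂Cᵢ` converge in Hausdorff distance to `∂C`. -/
theorem frontier_tendsto_of_hausdorff_tendsto {n : ℕ}
    {C : ℕ → Set (EuclideanSpace ℝ (Fin n))} {D : Set (EuclideanSpace ℝ (Fin n))}
    (hCcpt : ∀ i, IsCompact (C i)) (hCconv : ∀ i, Convex ℝ (C i))
    (hCint : ∀ i, (interior (C i)).Nonempty)
    (hDcpt : IsCompact D) (hDconv : Convex ℝ D) (hDint : (interior D).Nonempty)
    (hconv : Filter.Tendsto (fun i => Metric.hausdorffDist (C i) D)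
      Filter.atTop (nhds 0)) :
    Filter.Tendsto (fun i => Metric.hausdorffDist (frontier (C i)) (frontier D))
      Filter.atTop (nhds 0) := by
  have key : ∀ i, Metric.hausdorffDist (frontier (C i)) (frontier D) ≤
      Metric.hausdorffDist (C i) D := by
    intro i
    have hδ : 0 ≤ Metric.hausdorffDist (C i) D := Metric.hausdorffDist_nonneg
    have hCne : (C i).Nonempty := (hCint i).mono interior_subset
    have hDne : D.Nonempty := hDint.mono interior_subset
    have fin : EMetric.hausdorffEdist (C i) D ≠ ⊤ :=
      Metric.hausdorffEdist_ne_top_of_nonempty_of_bounded hCne hDne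
        (hCcpt i).isBounded hDcpt.isBounded
    have h1 : ∀ z ∈ C i, infDist z D ≤ Metric.hausdorffDist (C i) D :=
      fun z hz => Metric.infDist_le_hausdorffDist_of_mem hz fin
    have h2 : ∀ z ∈ D, infDist z (C i) ≤ Metric.hausdorffDist (C i) D := by
      intro z hz
      rw [Metric.hausdorffDist_comm]
      exact Metric.infDist_le_hausdorffDist_of_mem hz
        (by rwa [EMetric.hausdorffEdist_comm])
    refine Metric.hausdorffDist_le_of_infDist hδ ?_ ?_
    · exact fun z hz =>
        infDist_frontier_le_of_convex (hCcpt i) (hCconv i) hCne hδ h2 h1 hz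
    · exact fun z hz => infDist_frontier_le_of_convex hDcpt hDconv hDne hδ h1 h2 hz
  exact squeeze_zero (fun i => Metric.hausdorffDist_nonneg) key hconv
end
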